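/- The one-soliton solution q₁(x,t) = 2c₁e^{θ-θ*}(k* - k)/(e^{-(θ+θ*)} - ρ e^{θ+θ*}), q₂(x,t) = 2d₁e^{θ-θ*}(k* - k)/(e^{-(θ+θ*)} - ρ e^{θ+θ*}), with θ = -ikx - ik²t, ρ = |c₁|² - |d₁|², and Im(k) ≠ 0, satisfies the mixed coupled NLS system iq₁t + (1/2)q₁xx + (|q₂|² - |q₁|²)q₁ = 0 and iq₂t + (1/2)q₂xx + (|q₂|² - |q₁|²)q₂ = 0, on the domain where the denominator is nonzero. -/

import Mathlib

open Complex

/-- `θ(x,t) = -ikx - ik²t`. -/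
noncomputable def theta (k : ℂ) (x t : ℝ) : ℂ := -Complex.I * k * x - Complex.I * k ^ 2 * t

/-- The denominator `e^{-(θ+θ*)} - ρ e^{θ+θ*}`. -/
noncomputable def denom (k : ℂ) (ρ : ℝ) (x t : ℝ) : ℂ :=
  Complex.exp (-(theta k x t + (starRingEnd ℂ) (theta k x t))) -
    (ρ : ℂ) * Complex.exp (theta k x t + (starRingEnd ℂ) (theta k x t))

/-- The one-soliton component with amplitude `c`. -/
noncomputable def soliton (k : ℂ) (c : ℂ) (ρ : ℝ) (x t : ℝ) : ℂ :=
  2 * c * Complex.exp (theta k x t - (starRingEnd ℂ) (theta k x t)) * ((starRingEnd ℂ) k - k) /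
    denom k ρ x t

noncomputable def Pfun (k : ℂ) (ρ : ℝ) (x t : ℝ) : ℂ :=
  Complex.exp (-(theta k x t + (starRingEnd ℂ) (theta k x t))) +
    (ρ : ℂ) * Complex.exp (theta k x t + (starRingEnd ℂ) (theta k x t))

noncomputable def aK (k : ℂ) : ℂ := -I*k + I*(starRingEnd ℂ) k
noncomputable def bK (k : ℂ) : ℂ := -I*k - I*(starRingEnd ℂ) k
noncomputable def AK (k : ℂ) : ℂ := -I*k^2 + I*((starRingEnd ℂ) k)^2
noncomputable def BK (k : ℂ) : ℂ := -I*k^2 - I*((starRingEnd ℂ) k)^2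

lemma theta_conj (k : ℂ) (x t : ℝ) :
    (starRingEnd ℂ) (theta k x t) =
      Complex.I * (starRingEnd ℂ) k * x + Complex.I * ((starRingEnd ℂ) k) ^ 2 * t := by
  simp [theta, map_sub, map_mul, map_neg, Complex.conj_I, Complex.conj_ofReal]

lemma theta_sub_conj (k : ℂ) (x t : ℝ) :
    theta k x t - (starRingEnd ℂ) (theta k x t) = bK k * x + BK k * t := by
  rw [theta_conj]; simp [theta, bK, BK]; ring

lemma theta_add_conj (k : ℂ) (x t : ℝ) :
    theta k x t + (starRingEnd ℂ) (theta k x t) = aK k * x + AK k * t := by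
  rw [theta_conj]; simp [theta, aK, AK]; ring

lemma hasDerivAt_affine_exp (A B : ℂ) (x : ℝ) :
    HasDerivAt (fun x : ℝ => Complex.exp (A * x + B)) (A * Complex.exp (A * ↑x + B)) x := by
  have h : HasDerivAt (fun x : ℝ => A * (x : ℂ) + B) A x := by
    simpa using (Complex.ofRealCLM.hasDerivAt (x := x)).const_mul A |>.add_const B
  simpa [mul_comm] using h.cexp

section
variable (k : ℂ) (ρ : ℝ) (c : ℂ) (x t : ℝ)

lemma hasDerivAt_E_x : HasDerivAt (fun x' : ℝ =>
    Complex.exp (theta k x' t - (starRingEnd ℂ) (theta k x' t)))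
    (bK k * Complex.exp (theta k x t - (starRingEnd ℂ) (theta k x t))) x := by
  have hfun : (fun x' : ℝ => Complex.exp (theta k x' t - (starRingEnd ℂ) (theta k x' t)))
      = fun x' : ℝ => Complex.exp (bK k * x' + BK k * t) :=
    funext fun x' => by rw [theta_sub_conj]
  rw [hfun, theta_sub_conj]
  exact hasDerivAt_affine_exp _ _ x

lemma hasDerivAt_E_t : HasDerivAt (fun t' : ℝ =>
    Complex.exp (theta k x t' - (starRingEnd ℂ) (theta k x t')))
    (BK k * Complex.exp (theta k x t - (starRingEnd ℂ) (theta k x t))) t := by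
  have hfun : (fun t' : ℝ => Complex.exp (theta k x t' - (starRingEnd ℂ) (theta k x t')))
      = fun t' : ℝ => Complex.exp (BK k * t' + bK k * x) :=
    funext fun t' => by rw [theta_sub_conj]; ring_nf
  rw [hfun, theta_sub_conj]
  have := hasDerivAt_affine_exp (BK k) (bK k * x) t
  convert this using 2; ring

lemma hasDerivAt_D_x : HasDerivAt (fun x' : ℝ => denom k ρ x' t)
    (-aK k * Pfun k ρ x t) x := by
  have h1 : (fun x' : ℝ => denom k ρ x' t)
      = fun x' : ℝ => Complex.exp ((-aK k) * x' + (-(AK k * t)))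
          - (ρ:ℂ) * Complex.exp (aK k * x' + AK k * t) :=
    funext fun x' => by rw [denom, theta_add_conj]; ring_nf
  rw [h1]
  have h2 := (hasDerivAt_affine_exp (-aK k) (-(AK k * t)) x).sub
    ((hasDerivAt_affine_exp (aK k) (AK k * t) x).const_mul (ρ:ℂ))
  refine h2.congr_deriv ?_
  rw [Pfun, theta_add_conj,
    show -(aK k*(x:ℂ)+AK k*t) = -aK k*x + -(AK k*(t:ℂ)) by ring]
  ring

lemma hasDerivAt_P_x : HasDerivAt (fun x' : ℝ => Pfun k ρ x' t)
    (-aK k * denom k ρ x t) x := by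
  have h1 : (fun x' : ℝ => Pfun k ρ x' t)
      = fun x' : ℝ => Complex.exp ((-aK k) * x' + (-(AK k * t)))
          + (ρ:ℂ) * Complex.exp (aK k * x' + AK k * t) :=
    funext fun x' => by
      rw [Pfun, theta_add_conj,
        show -(aK k*(x':ℂ)+AK k*t) = -aK k*x' + -(AK k*(t:ℂ)) by ring]
  rw [h1]
  have h2 := (hasDerivAt_affine_exp (-aK k) (-(AK k * t)) x).add
    ((hasDerivAt_affine_exp (aK k) (AK k * t) x).const_mul (ρ:ℂ))
  refine h2.congr_deriv ?_
  rw [denom, theta_add_conj,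
    show -(aK k*(x:ℂ)+AK k*t) = -aK k*x + -(AK k*(t:ℂ)) by ring]
  ring

lemma hasDerivAt_D_t : HasDerivAt (fun t' : ℝ => denom k ρ x t')
    (-AK k * Pfun k ρ x t) t := by
  have h1 : (fun t' : ℝ => denom k ρ x t')
      = fun t' : ℝ => Complex.exp ((-AK k) * t' + (-(aK k * x)))
          - (ρ:ℂ) * Complex.exp (AK k * t' + aK k * x) :=
    funext fun t' => by
      rw [denom, theta_add_conj,
        show -(aK k*(x:ℂ)+AK k*t') = -AK k*t' + -(aK k*(x:ℂ)) by ring,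
        show aK k*(x:ℂ)+AK k*t' = AK k*t' + aK k*(x:ℂ) by ring]
  rw [h1]
  have h2 := (hasDerivAt_affine_exp (-AK k) (-(aK k * x)) t).sub
    ((hasDerivAt_affine_exp (AK k) (aK k * x) t).const_mul (ρ:ℂ))
  refine h2.congr_deriv ?_
  rw [Pfun, theta_add_conj,
    show -(aK k*(x:ℂ)+AK k*t) = -AK k*t + -(aK k*(x:ℂ)) by ring,
    show aK k*(x:ℂ)+AK k*t = AK k*t + aK k*(x:ℂ) by ring]
  ring

lemma hasDerivAt_P_t : HasDerivAt (fun t' : ℝ => Pfun k ρ x t')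
    (-AK k * denom k ρ x t) t := by
  have h1 : (fun t' : ℝ => Pfun k ρ x t')
      = fun t' : ℝ => Complex.exp ((-AK k) * t' + (-(aK k * x)))
          + (ρ:ℂ) * Complex.exp (AK k * t' + aK k * x) :=
    funext fun t' => by
      rw [Pfun, theta_add_conj,
        show -(aK k*(x:ℂ)+AK k*t') = -AK k*t' + -(aK k*(x:ℂ)) by ring,
        show aK k*(x:ℂ)+AK k*t' = AK k*t' + aK k*(x:ℂ) by ring]
  rw [h1]
  have h2 := (hasDerivAt_affine_exp (-AK k) (-(aK k * x)) t).add
    ((hasDerivAt_affine_exp (AK k) (aK k * x) t).const_mul (ρ:ℂ))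
  refine h2.congr_deriv ?_
  rw [denom, theta_add_conj,
    show -(aK k*(x:ℂ)+AK k*t) = -AK k*t + -(aK k*(x:ℂ)) by ring,
    show aK k*(x:ℂ)+AK k*t = AK k*t + aK k*(x:ℂ) by ring]
  ring

lemma Psq_sub_Dsq : Pfun k ρ x t ^ 2 - denom k ρ x t ^ 2 = 4 * ρ := by
  rw [Pfun, denom]
  have h : Complex.exp (-(theta k x t + (starRingEnd ℂ) (theta k x t))) *
      Complex.exp (theta k x t + (starRingEnd ℂ) (theta k x t)) = 1 := by
    rw [← Complex.exp_add]; ring_nf; exact Complex.exp_zero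
  linear_combination (4*(ρ:ℂ)) * h

end

noncomputable def dsol (k c : ℂ) (ρ : ℝ) (x t : ℝ) : ℂ :=
  (2*c*(bK k * Complex.exp (theta k x t - (starRingEnd ℂ) (theta k x t)))
      * ((starRingEnd ℂ) k - k) * denom k ρ x t
   - 2*c*Complex.exp (theta k x t - (starRingEnd ℂ) (theta k x t))
      * ((starRingEnd ℂ) k - k) * (-aK k * Pfun k ρ x t)) / (denom k ρ x t)^2

section
variable (k : ℂ) (ρ : ℝ) (c : ℂ) (x t : ℝ)

lemma sol_hasDerivAt_x (h0 : denom k ρ x t ≠ 0) :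
    HasDerivAt (fun x'' : ℝ => soliton k c ρ x'' t) (dsol k c ρ x t) x := by
  have hN : HasDerivAt
      (fun x'' : ℝ => 2 * c * Complex.exp (theta k x'' t - (starRingEnd ℂ) (theta k x'' t))
        * ((starRingEnd ℂ) k - k))
      (2 * c * (bK k * Complex.exp (theta k x t - (starRingEnd ℂ) (theta k x t)))
        * ((starRingEnd ℂ) k - k)) x :=
    ((hasDerivAt_E_x k x t).const_mul (2*c)).mul_const _
  have h := hN.div (hasDerivAt_D_x k ρ x t) h0
  simp only [soliton, dsol]
  exact h

lemma sol_hasDerivAt_t (h0 : denom k ρ x t ≠ 0) :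
    HasDerivAt (fun t' : ℝ => soliton k c ρ x t')
      ((2 * c * (BK k * Complex.exp (theta k x t - (starRingEnd ℂ) (theta k x t)))
          * ((starRingEnd ℂ) k - k) * denom k ρ x t
        - 2 * c * Complex.exp (theta k x t - (starRingEnd ℂ) (theta k x t))
          * ((starRingEnd ℂ) k - k) * (-AK k * Pfun k ρ x t)) / (denom k ρ x t)^2) t := by
  have hN : HasDerivAt
      (fun t' : ℝ => 2 * c * Complex.exp (theta k x t' - (starRingEnd ℂ) (theta k x t'))
        * ((starRingEnd ℂ) k - k))
      (2 * c * (BK k * Complex.exp (theta k x t - (starRingEnd ℂ) (theta k x t)))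
        * ((starRingEnd ℂ) k - k)) t :=
    ((hasDerivAt_E_t k x t).const_mul (2*c)).mul_const _
  have h := hN.div (hasDerivAt_D_t k ρ x t) h0
  simp only [soliton]
  exact h

lemma dsol_hasDerivAt_x (h0 : denom k ρ x t ≠ 0) :
    HasDerivAt (fun x' : ℝ => dsol k c ρ x' t)
      (((2*c*(bK k * (bK k * Complex.exp (theta k x t - (starRingEnd ℂ) (theta k x t))))
            * ((starRingEnd ℂ) k - k) * denom k ρ x t
          + 2*c*(bK k * Complex.exp (theta k x t - (starRingEnd ℂ) (theta k x t)))
            * ((starRingEnd ℂ) k - k) * (-aK k * Pfun k ρ x t)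
          - (2*c*(bK k * Complex.exp (theta k x t - (starRingEnd ℂ) (theta k x t)))
              * ((starRingEnd ℂ) k - k) * (-aK k * Pfun k ρ x t)
            + 2*c*Complex.exp (theta k x t - (starRingEnd ℂ) (theta k x t))
              * ((starRingEnd ℂ) k - k) * (-aK k * (-aK k * denom k ρ x t))))
          * (denom k ρ x t)^2
        - (2*c*(bK k * Complex.exp (theta k x t - (starRingEnd ℂ) (theta k x t)))
            * ((starRingEnd ℂ) k - k) * denom k ρ x t
          - 2*c*Complex.exp (theta k x t - (starRingEnd ℂ) (theta k x t))
            * ((starRingEnd ℂ) k - k) * (-aK k * Pfun k ρ x t))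
          * (2 * denom k ρ x t * (-aK k * Pfun k ρ x t)))
        / ((denom k ρ x t)^2)^2) x := by
  have hE := hasDerivAt_E_x k x t
  have hD := hasDerivAt_D_x k ρ x t
  have hP := hasDerivAt_P_x k ρ x t
  have hE' : HasDerivAt (fun x' : ℝ => bK k * Complex.exp (theta k x' t - (starRingEnd ℂ) (theta k x' t)))
      (bK k * (bK k * Complex.exp (theta k x t - (starRingEnd ℂ) (theta k x t)))) x :=
    hE.const_mul _
  have hmP : HasDerivAt (fun x' : ℝ => -aK k * Pfun k ρ x' t)
      (-aK k * (-aK k * denom k ρ x t)) x := hP.const_mul _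
  have hN1 : HasDerivAt (fun x' : ℝ =>
      2*c*(bK k * Complex.exp (theta k x' t - (starRingEnd ℂ) (theta k x' t)))
        * ((starRingEnd ℂ) k - k) * denom k ρ x' t)
      (2*c*(bK k * (bK k * Complex.exp (theta k x t - (starRingEnd ℂ) (theta k x t))))
          * ((starRingEnd ℂ) k - k) * denom k ρ x t
        + 2*c*(bK k * Complex.exp (theta k x t - (starRingEnd ℂ) (theta k x t)))
          * ((starRingEnd ℂ) k - k) * (-aK k * Pfun k ρ x t)) x :=
    ((hE'.const_mul (2*c)).mul_const _).mul hD
  have hN2 : HasDerivAt (fun x' : ℝ =>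
      2*c*Complex.exp (theta k x' t - (starRingEnd ℂ) (theta k x' t))
        * ((starRingEnd ℂ) k - k) * (-aK k * Pfun k ρ x' t))
      (2*c*(bK k * Complex.exp (theta k x t - (starRingEnd ℂ) (theta k x t)))
          * ((starRingEnd ℂ) k - k) * (-aK k * Pfun k ρ x t)
        + 2*c*Complex.exp (theta k x t - (starRingEnd ℂ) (theta k x t))
          * ((starRingEnd ℂ) k - k) * (-aK k * (-aK k * denom k ρ x t))) x :=
    ((hE.const_mul (2*c)).mul_const _).mul hmP
  have hDsq : HasDerivAt (fun x' : ℝ => (denom k ρ x' t)^2)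
      (2 * denom k ρ x t * (-aK k * Pfun k ρ x t)) x := by
    have h2 := hD.mul hD
    have hf : (fun x' : ℝ => (denom k ρ x' t)^2)
        = fun x' : ℝ => denom k ρ x' t * denom k ρ x' t := funext fun _ => sq _
    rw [hf]
    refine h2.congr_deriv ?_
    ring
  have h := (hN1.sub hN2).div hDsq (pow_ne_zero 2 h0)
  simp only [dsol]
  exact h

end

lemma master (k c : ℂ) (ρ : ℝ) (x t : ℝ) (h0 : denom k ρ x t ≠ 0) :
    Complex.I * deriv (fun t' : ℝ => soliton k c ρ x t') t +
      (1/2 : ℂ) * deriv (fun x' : ℝ => deriv (fun x'' : ℝ => soliton k c ρ x'' t) x') x +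
      (-((4:ℂ)*ρ*(aK k)^2) / (denom k ρ x t)^2) * soliton k c ρ x t = 0 := by
  have ht := (sol_hasDerivAt_t k ρ c x t h0).deriv
  have hev : (fun x' : ℝ => deriv (fun x'' : ℝ => soliton k c ρ x'' t) x')
      =ᶠ[nhds x] (fun x' : ℝ => dsol k c ρ x' t) := by
    have hcont : ContinuousAt (fun x' : ℝ => denom k ρ x' t) x :=
      (hasDerivAt_D_x k ρ x t).continuousAt
    filter_upwards [hcont.eventually_ne h0] with x' hx'
    exact (sol_hasDerivAt_x k ρ c x' t hx').deriv
  have hxx : deriv (fun x' : ℝ => deriv (fun x'' : ℝ => soliton k c ρ x'' t) x') x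
      = _ := hev.deriv_eq.trans (dsol_hasDerivAt_x k ρ c x t h0).deriv
  rw [ht, hxx]
  have hPD := Psq_sub_Dsq k ρ x t
  have hexp := Complex.exp_ne_zero (theta k x t - (starRingEnd ℂ) (theta k x t))
  simp only [soliton, aK, bK, AK, BK]
  rw [show (ρ:ℂ) = (Pfun k ρ x t ^ 2 - denom k ρ x t ^ 2) / 4 by linear_combination -hPD / 4]
  field_simp
  ring

lemma denom_conj (k : ℂ) (ρ : ℝ) (x t : ℝ) :
    (starRingEnd ℂ) (denom k ρ x t) = denom k ρ x t := by
  simp only [denom, map_sub, map_mul, map_neg, map_add, ← Complex.exp_conj,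
    Complex.conj_conj, Complex.conj_ofReal]
  ring_nf

lemma sol_abs_sq (k c : ℂ) (ρ : ℝ) (x t : ℝ) (h0 : denom k ρ x t ≠ 0) :
    ((‖(soliton k c ρ x t)‖ ^ 2 : ℝ) : ℂ)
      = 4 * ((‖c‖ ^ 2 : ℝ) : ℂ) * (aK k)^2 / (denom k ρ x t)^2 := by
  have h1 : ((‖(soliton k c ρ x t)‖ ^ 2 : ℝ) : ℂ)
      = soliton k c ρ x t * (starRingEnd ℂ) (soliton k c ρ x t) := by
    rw [Complex.sq_norm, Complex.mul_conj]
  have hc : ((‖c‖ ^ 2 : ℝ) : ℂ) = c * (starRingEnd ℂ) c := by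
    rw [Complex.sq_norm, Complex.mul_conj]
  have hEE : Complex.exp (theta k x t - (starRingEnd ℂ) (theta k x t)) *
      (starRingEnd ℂ) (Complex.exp (theta k x t - (starRingEnd ℂ) (theta k x t))) = 1 := by
    rw [← Complex.exp_conj, ← Complex.exp_add]
    simp only [map_sub, Complex.conj_conj]
    ring_nf
    exact Complex.exp_zero
  rw [h1, hc]
  simp only [soliton, map_div₀, map_mul, map_sub, Complex.conj_conj, denom_conj, map_ofNat]
  have hI : (-I*k + I*(starRingEnd ℂ) k)^2 = -((starRingEnd ℂ) k - k)^2 := by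
    linear_combination ((starRingEnd ℂ) k - k)^2 * Complex.I_sq
  rw [eq_inv_of_mul_eq_one_right hEE, aK, hI]
  field_simp
  ring

/-- The one-soliton solution satisfies the mixed coupled NLS system wherever the
denominator is nonzero. -/
theorem one_soliton_solves_mCNLS (k : ℂ) (hk : k.im ≠ 0) (c1 d1 : ℂ) :
    ∀ x t : ℝ, denom k (‖c1‖ ^ 2 - ‖d1‖ ^ 2) x t ≠ 0 →
      (Complex.I * deriv (fun t' : ℝ =>
            soliton k c1 (‖c1‖ ^ 2 - ‖d1‖ ^ 2) x t') t +
          (1 / 2 : ℂ) * deriv (fun x' : ℝ => deriv (fun x'' : ℝ =>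
            soliton k c1 (‖c1‖ ^ 2 - ‖d1‖ ^ 2) x'' t) x') x +
          ((‖soliton k d1 (‖c1‖ ^ 2 - ‖d1‖ ^ 2) x t‖ ^ 2 -
              ‖soliton k c1 (‖c1‖ ^ 2 - ‖d1‖ ^ 2) x t‖ ^ 2 :
              ℝ) : ℂ) *
            soliton k c1 (‖c1‖ ^ 2 - ‖d1‖ ^ 2) x t = 0) ∧
      (Complex.I * deriv (fun t' : ℝ =>
            soliton k d1 (‖c1‖ ^ 2 - ‖d1‖ ^ 2) x t') t +
          (1 / 2 : ℂ) * deriv (fun x' : ℝ => deriv (fun x'' : ℝ =>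
            soliton k d1 (‖c1‖ ^ 2 - ‖d1‖ ^ 2) x'' t) x') x +
          ((‖soliton k d1 (‖c1‖ ^ 2 - ‖d1‖ ^ 2) x t‖ ^ 2 -
              ‖soliton k c1 (‖c1‖ ^ 2 - ‖d1‖ ^ 2) x t‖ ^ 2 :
              ℝ) : ℂ) *
            soliton k d1 (‖c1‖ ^ 2 - ‖d1‖ ^ 2) x t = 0) := by
  intro x t h0
  set ρ : ℝ := ‖c1‖ ^ 2 - ‖d1‖ ^ 2 with hρ
  have hco : ((‖(soliton k d1 ρ x t)‖ ^ 2 -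
        ‖(soliton k c1 ρ x t)‖ ^ 2 : ℝ) : ℂ)
      = -((4:ℂ)*ρ*(aK k)^2) / (denom k ρ x t)^2 := by
    rw [Complex.ofReal_sub, sol_abs_sq k d1 ρ x t h0, sol_abs_sq k c1 ρ x t h0]
    have h2 : ((ρ : ℝ) : ℂ) = ((‖c1‖ ^ 2 : ℝ) : ℂ) - ((‖d1‖ ^ 2 : ℝ) : ℂ) := by
      rw [hρ]; push_cast; ring
    rw [h2]
    field_simp
    ring
  rw [hco]
  exact ⟨master k c1 ρ x t h0, master k d1 ρ x t h0⟩
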